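/- Let H be a linear 3-uniform hypergraph. Then the bow-tie graph B of H has maximum degree at most 8. -/

import Mathlib

open Finset

variable {V : Type*} [Fintype V] [DecidableEq V]

/-- The vertex set of the bow-tie graph: unordered pairs of hyperedges
intersecting in exactly one vertex. -/
def bowPairs (E : Finset (Finset V)) : Finset (Finset (Finset V)) :=
  (E.powersetCard 2).filter fun s => ∃ e ∈ s, ∃ f ∈ s, e ≠ f ∧ (e ∩ f).card = 1

/-- The adjacency relation of the bow-tie graph: `{e,f} ~ {f,g}` where `e, f, g` are
distinct hyperedges pairwise intersecting in exactly one vertex with empty common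
intersection. -/
def IsBowAdj (E : Finset (Finset V)) (s t : Finset (Finset V)) : Prop :=
  ∃ e f g, e ∈ E ∧ f ∈ E ∧ g ∈ E ∧ e ≠ f ∧ f ≠ g ∧ e ≠ g ∧
    (e ∩ f).card = 1 ∧ (f ∩ g).card = 1 ∧ (e ∩ g).card = 1 ∧ e ∩ f ∩ g = ∅ ∧
    s = {e, f} ∧ t = {f, g}

theorem stmt_12 (E : Finset (Finset V))
    (huniform : ∀ e ∈ E, e.card = 3)
    (hlinear : ∀ e ∈ E, ∀ f ∈ E, e ≠ f → (e ∩ f).card ≤ 1)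
    (B : SimpleGraph ↥(bowPairs E)) [DecidableRel B.Adj]
    (hB : ∀ s t : ↥(bowPairs E), B.Adj s t ↔ IsBowAdj E ↑s ↑t) :
    ∀ s : ↥(bowPairs E), B.degree s ≤ 8 := by
  intro s
  -- unpack the vertex s = {e, f}
  have hsmem := s.2
  simp only [bowPairs, Finset.mem_filter, Finset.mem_powersetCard] at hsmem
  obtain ⟨⟨hsE, hs2⟩, e, he, f, hf, hef, hcard⟩ := hsmem
  have hse : (s : Finset (Finset V)) = {e, f} := by
    refine (Finset.eq_of_subset_of_card_le ?_ ?_).symm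
    · intro a ha
      simp only [Finset.mem_insert, Finset.mem_singleton] at ha
      rcases ha with rfl | rfl <;> assumption
    · exact le_of_eq (by rw [hs2, Finset.card_pair hef])
  have heE : e ∈ E := hsE he
  have hfE : f ∈ E := hsE hf
  -- key facts about each neighbor
  have key : ∀ t : ↥(bowPairs E), B.Adj s t → ∃ f₁ g,
      f₁ ∈ ({e, f} : Finset (Finset V)) ∧ g ∈ E ∧
      (t : Finset (Finset V)) = {f₁, g} ∧ g ≠ e ∧ g ≠ f ∧
      (g ∩ e).card = 1 ∧ (g ∩ f).card = 1 ∧ e ∩ f ∩ g = ∅ := by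
    intro t hadj
    rw [hB] at hadj
    obtain ⟨e₁, f₁, g, he₁, hf₁, hg, h12, h23, h13, c12, c23, c13, hempty, hseq, hteq⟩ := hadj
    rw [hse] at hseq
    have he₁m : e₁ ∈ ({e, f} : Finset (Finset V)) := by rw [hseq]; simp
    have hf₁m : f₁ ∈ ({e, f} : Finset (Finset V)) := by rw [hseq]; simp
    simp only [Finset.mem_insert, Finset.mem_singleton] at he₁m hf₁m
    have hcase : (e₁ = e ∧ f₁ = f) ∨ (e₁ = f ∧ f₁ = e) := by
      rcases he₁m with rfl | rfl <;> rcases hf₁m with rfl | rfl <;> tauto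
    rcases hcase with ⟨rfl, rfl⟩ | ⟨rfl, rfl⟩
    · exact ⟨f₁, g, by simp, hg, hteq, fun h => h13 h.symm, fun h => h23 h.symm,
        by rw [Finset.inter_comm]; exact c13, by rw [Finset.inter_comm]; exact c23, hempty⟩
    · refine ⟨f₁, g, by simp, hg, hteq, fun h => h23 h.symm, fun h => h13 h.symm,
        by rw [Finset.inter_comm]; exact c23, by rw [Finset.inter_comm]; exact c13, ?_⟩
      rw [Finset.inter_comm f₁ e₁]; exact hempty
  -- the encoding map
  set φ : ↥(bowPairs E) → Finset (Finset V) × Finset V × Finset V :=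
    fun t => ((t : Finset (Finset V)) ∩ {e, f},
      (((t : Finset (Finset V)) \ {e, f}).sup id) ∩ e,
      (((t : Finset (Finset V)) \ {e, f}).sup id) ∩ f) with hφ
  -- compute φ on neighbors
  have hφval : ∀ (t : ↥(bowPairs E)) (f₁ g : Finset V),
      f₁ ∈ ({e, f} : Finset (Finset V)) → (t : Finset (Finset V)) = {f₁, g} →
      g ≠ e → g ≠ f → φ t = ({f₁}, g ∩ e, g ∩ f) := by
    intro t f₁ g hf₁m hteq hge hgf
    have h1 : (t : Finset (Finset V)) ∩ {e, f} = {f₁} := by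
      rw [hteq]
      ext a
      simp only [Finset.mem_inter, Finset.mem_insert, Finset.mem_singleton] at *
      constructor
      · rintro ⟨rfl | rfl, h⟩
        · rfl
        · rcases h with rfl | rfl <;> [exact absurd rfl hge; exact absurd rfl hgf]
      · rintro rfl; exact ⟨Or.inl rfl, hf₁m⟩
    have h2 : (t : Finset (Finset V)) \ {e, f} = {g} := by
      rw [hteq]
      ext a
      simp only [Finset.mem_sdiff, Finset.mem_insert, Finset.mem_singleton] at *
      constructor
      · rintro ⟨rfl | rfl, h⟩
        · rcases hf₁m with rfl | rfl <;> tauto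
        · rfl
      · rintro rfl
        exact ⟨Or.inr rfl, by rintro (rfl | rfl) <;> [exact hge rfl; exact hgf rfl]⟩
    simp [hφ, h1, h2]
  -- target set
  set T : Finset (Finset (Finset V) × Finset V × Finset V) :=
    ({e, f} : Finset (Finset V)).image (fun a => ({a} : Finset (Finset V))) ×ˢ
      (((e \ f).image fun a => ({a} : Finset V)) ×ˢ ((f \ e).image fun a => ({a} : Finset V)))
    with hT
  have hdeg : B.degree s = (B.neighborFinset s).card := rfl
  rw [hdeg]
  have hmain : (B.neighborFinset s).card ≤ T.card := by
    apply Finset.card_le_card_of_injOn φ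
    · intro t ht
      rw [Finset.mem_coe, SimpleGraph.mem_neighborFinset] at ht
      obtain ⟨f₁, g, hf₁m, hgE, hteq, hge, hgf, cge, cgf, hemp⟩ := key t ht
      rw [hφval t f₁ g hf₁m hteq hge hgf]
      obtain ⟨y, hy⟩ := Finset.card_eq_one.mp cge
      obtain ⟨z, hz⟩ := Finset.card_eq_one.mp cgf
      have hyg : y ∈ g ∧ y ∈ e := by
        have : y ∈ g ∩ e := hy ▸ Finset.mem_singleton_self y
        exact Finset.mem_inter.mp this
      have hzg : z ∈ g ∧ z ∈ f := by
        have : z ∈ g ∩ f := hz ▸ Finset.mem_singleton_self z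
        exact Finset.mem_inter.mp this
      have hynf : y ∉ f := by
        intro hyf
        have : y ∈ e ∩ f ∩ g := by simp [hyg.1, hyg.2, hyf]
        rw [hemp] at this; exact absurd this (Finset.notMem_empty y)
      have hzne : z ∉ e := by
        intro hze
        have : z ∈ e ∩ f ∩ g := by simp [hzg.1, hzg.2, hze]
        rw [hemp] at this; exact absurd this (Finset.notMem_empty z)
      rw [hT]
      simp only [Finset.mem_coe, Finset.mem_product, Finset.mem_image]
      exact ⟨⟨f₁, hf₁m, rfl⟩, ⟨y, Finset.mem_sdiff.mpr ⟨hyg.2, hynf⟩, hy.symm⟩,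
        ⟨z, Finset.mem_sdiff.mpr ⟨hzg.2, hzne⟩, hz.symm⟩⟩
    · intro t ht t' ht' hφeq
      rw [Finset.mem_coe, SimpleGraph.mem_neighborFinset] at ht ht'
      obtain ⟨f₁, g, hf₁m, hgE, hteq, hge, hgf, cge, cgf, hemp⟩ := key t ht
      obtain ⟨f₂, g', hf₂m, hg'E, ht'eq, hg'e, hg'f, cg'e, cg'f, hemp'⟩ := key t' ht'
      rw [hφval t f₁ g hf₁m hteq hge hgf, hφval t' f₂ g' hf₂m ht'eq hg'e hg'f] at hφeq
      have h1 : ({f₁} : Finset (Finset V)) = {f₂} := congrArg Prod.fst hφeq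
      have h2' : g ∩ e = g' ∩ e := congrArg (fun p => p.2.1) hφeq
      have h3' : g ∩ f = g' ∩ f := congrArg (fun p => p.2.2) hφeq
      have hf12 : f₁ = f₂ := Finset.singleton_injective h1
      -- show g = g'
      have hgg' : g = g' := by
        by_contra hne
        have hle := hlinear g hgE g' hg'E hne
        obtain ⟨y, hy⟩ := Finset.card_eq_one.mp cge
        obtain ⟨z, hz⟩ := Finset.card_eq_one.mp cgf
        have hyg : y ∈ g ∧ y ∈ e := Finset.mem_inter.mp (hy ▸ Finset.mem_singleton_self y)
        have hzg : z ∈ g ∧ z ∈ f := Finset.mem_inter.mp (hz ▸ Finset.mem_singleton_self z)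
        have hyg' : y ∈ g' := by
          have : y ∈ g' ∩ e := h2' ▸ (hy ▸ Finset.mem_singleton_self y)
          exact (Finset.mem_inter.mp this).1
        have hzg' : z ∈ g' := by
          have : z ∈ g' ∩ f := h3' ▸ (hz ▸ Finset.mem_singleton_self z)
          exact (Finset.mem_inter.mp this).1
        have hynf : y ∉ f := by
          intro hyf
          have : y ∈ e ∩ f ∩ g := by simp [hyg.1, hyg.2, hyf]
          rw [hemp] at this; exact absurd this (Finset.notMem_empty y)
        have hyz : y ≠ z := fun h => hynf (h ▸ hzg.2)
        have hsub : ({y, z} : Finset V) ⊆ g ∩ g' := by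
          intro a ha
          simp only [Finset.mem_insert, Finset.mem_singleton] at ha
          rcases ha with rfl | rfl
          · exact Finset.mem_inter.mpr ⟨hyg.1, hyg'⟩
          · exact Finset.mem_inter.mpr ⟨hzg.1, hzg'⟩
        have : 2 ≤ (g ∩ g').card := by
          calc 2 = ({y, z} : Finset V).card := (Finset.card_pair hyz).symm
          _ ≤ (g ∩ g').card := Finset.card_le_card hsub
        omega
      apply Subtype.ext
      rw [hteq, ht'eq, hf12, hgg']
  refine hmain.trans ?_
  rw [hT]
  rw [Finset.card_product, Finset.card_product]
  have c1 : (({e, f} : Finset (Finset V)).image fun a => ({a} : Finset (Finset V))).card ≤ 2 :=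
    (Finset.card_image_le).trans (Finset.card_insert_le _ _ |>.trans (by simp))
  have cef : (e \ f).card = 2 := by
    have := Finset.card_sdiff_add_card_inter e f
    rw [huniform e heE, hcard] at this
    omega
  have cfe : (f \ e).card = 2 := by
    have := Finset.card_sdiff_add_card_inter f e
    rw [huniform f hfE, Finset.inter_comm, hcard] at this
    omega
  have c2 : ((e \ f).image fun a => ({a} : Finset V)).card ≤ 2 :=
    (Finset.card_image_le).trans (le_of_eq cef)
  have c3 : ((f \ e).image fun a => ({a} : Finset V)).card ≤ 2 :=
    (Finset.card_image_le).trans (le_of_eq cfe)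
  calc _ ≤ 2 * (2 * 2) := by
        exact Nat.mul_le_mul c1 (Nat.mul_le_mul c2 c3)
    _ = 8 := rfl
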